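/- Let n ≥ 1, σ > 0, k ≥ 1, p ≥ 2, and let ε ∈ ℝ^n be a random vector with i.i.d. N(0, σ²) entries. Let G be a finite index set with |G| ≤ p, and for each g ∈ G let X_g ∈ ℝ^{n×m_g} be a matrix all of whose entries are in {0,1} and which has at most p_g nonzero columns, where 1 ≤ p_g ≤ 2^k − 1. Then P( max_{g∈G} (1/n) √((2^k − 1)/p_g) ‖X_gᵀ ε‖ > 2 √(2(2^k − 1)) σ √(2 log p / n) ) < 1/p. -/

import Mathlib

open Finset MeasureTheory ProbabilityTheory
open scoped ENNReal NNReal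
open Real

section AuxiliaryLemmas

lemma gpdf_mul_exp_mul (t x : ℝ) :
    gaussianPDFReal 0 1 x * rexp (t * x)
      = rexp (t ^ 2 / 2) * ((√(2 * π))⁻¹ * rexp (-(1/2) * (x - t) ^ 2)) := by
  simp only [gaussianPDFReal, NNReal.coe_one, mul_one, sub_zero]
  rw [mul_assoc, ← Real.exp_add, mul_comm (rexp (t ^ 2 / 2)), mul_assoc, ← Real.exp_add]
  congr 1
  ring

lemma integrable_gpdf_mul_exp_mul (t : ℝ) :
    Integrable (fun x => gaussianPDFReal 0 1 x * rexp (t * x)) := by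
  simp only [gpdf_mul_exp_mul]
  exact (((integrable_exp_neg_mul_sq (by norm_num : (0:ℝ) < 1/2)).comp_sub_right
    t).const_mul _).const_mul _

lemma integral_gpdf_mul_exp_mul (t : ℝ) :
    ∫ x, gaussianPDFReal 0 1 x * rexp (t * x) = rexp (t ^ 2 / 2) := by
  simp only [gpdf_mul_exp_mul]
  rw [integral_const_mul, integral_const_mul,
    integral_sub_right_eq_self (fun a => rexp (-(1/2) * a ^ 2)) t, integral_gaussian]
  rw [show π / (1/2) = 2 * π by ring]
  rw [inv_mul_cancel₀ (by positivity : √(2*π) ≠ 0), mul_one]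

lemma gpdf_mul_exp_sq {a : ℝ} (x : ℝ) :
    gaussianPDFReal 0 1 x * rexp (a * x ^ 2)
      = (√(2 * π))⁻¹ * rexp (-(1/2 - a) * x ^ 2) := by
  simp only [gaussianPDFReal, NNReal.coe_one, mul_one, sub_zero]
  rw [mul_assoc, ← Real.exp_add]
  congr 1
  ring

lemma integrable_gpdf_mul_exp_sq {a : ℝ} (ha : a < 1/2) :
    Integrable (fun x => gaussianPDFReal 0 1 x * rexp (a * x ^ 2)) := by
  simp only [gpdf_mul_exp_sq]
  exact (integrable_exp_neg_mul_sq (by linarith)).const_mul _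

lemma integral_gpdf_mul_exp_sq {a : ℝ} (ha : a < 1/2) :
    ∫ x, gaussianPDFReal 0 1 x * rexp (a * x ^ 2) = (√(1 - 2 * a))⁻¹ := by
  simp only [gpdf_mul_exp_sq]
  rw [integral_const_mul, integral_gaussian, ← Real.sqrt_inv, ← Real.sqrt_mul (by positivity),
    ← Real.sqrt_inv]
  congr 1
  have hπ : (0:ℝ) < π := pi_pos
  have h2 : (0:ℝ) < 1/2 - a := by linarith
  rw [eq_comm, inv_eq_iff_eq_inv]
  field_simp
open scoped NNReal ENNReal

lemma lintegral_ofReal_stdGaussian {f : ℝ → ℝ} (hm : Measurable f) (hnn : ∀ x, 0 ≤ f x)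
    (hint : Integrable (fun x => gaussianPDFReal 0 1 x * f x)) :
    ∫⁻ x, ENNReal.ofReal (f x) ∂(gaussianReal 0 1)
      = ENNReal.ofReal (∫ x, gaussianPDFReal 0 1 x * f x) := by
  rw [gaussianReal_of_var_ne_zero _ one_ne_zero,
    lintegral_withDensity_eq_lintegral_mul _ (measurable_gaussianPDF 0 1) hm.ennreal_ofReal]
  rw [ofReal_integral_eq_lintegral_ofReal hint
      (ae_of_all _ fun x => mul_nonneg (gaussianPDFReal_nonneg 0 1 x) (hnn x))]
  apply lintegral_congr fun x => ?_
  simp [gaussianPDF, ENNReal.ofReal_mul (gaussianPDFReal_nonneg 0 1 x)]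

lemma lintegral_exp_sq_stdGaussian {a : ℝ} (ha : a < 1/2) :
    ∫⁻ x, ENNReal.ofReal (rexp (a * x ^ 2)) ∂(gaussianReal 0 1)
      = ENNReal.ofReal ((√(1 - 2 * a))⁻¹) := by
  rw [lintegral_ofReal_stdGaussian (by fun_prop) (fun x => Real.exp_nonneg _) (integrable_gpdf_mul_exp_sq ha),
    integral_gpdf_mul_exp_sq ha]

lemma lintegral_exp_mul_stdGaussian (t : ℝ) :
    ∫⁻ x, ENNReal.ofReal (rexp (t * x)) ∂(gaussianReal 0 1)
      = ENNReal.ofReal (rexp (t ^ 2 / 2)) := by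
  rw [lintegral_ofReal_stdGaussian (by fun_prop) (fun x => Real.exp_nonneg _)
    (integrable_gpdf_mul_exp_mul t), integral_gpdf_mul_exp_mul t]

lemma gaussianReal_eq_map (v : ℝ≥0) (hv : v ≠ 0) :
    gaussianReal 0 v = (gaussianReal 0 1).map (fun x => √v * x) := by
  have h := gaussianReal_map_const_mul (μ := 0) (v := 1) (√v)
  simp only [mul_zero] at h
  rw [show (fun x => √v * x) = (√v * ·) from rfl, h]
  congr 1
  ext
  simp [Real.sq_sqrt v.coe_nonneg]

lemma lintegral_exp_mul_gaussian (v : ℝ≥0) (t : ℝ) :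
    ∫⁻ x, ENNReal.ofReal (rexp (t * x)) ∂(gaussianReal 0 v)
      = ENNReal.ofReal (rexp (v * t ^ 2 / 2)) := by
  by_cases hv : v = 0
  · subst hv; rw [gaussianReal_zero_var, lintegral_dirac]; simp
  · have hg : Measurable fun x : ℝ => √v * x := by fun_prop
    have hf : Measurable fun x : ℝ => ENNReal.ofReal (rexp (t * x)) := by fun_prop
    rw [gaussianReal_eq_map v hv, lintegral_map hf hg]
    have h1 : ∀ x : ℝ, t * (√v * x) = (t * √v) * x := fun x => by ring
    simp_rw [h1, lintegral_exp_mul_stdGaussian (t * √v)]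
    congr 1
    rw [mul_pow, Real.sq_sqrt v.coe_nonneg]
    ring

lemma lintegral_pi_prod : ∀ {n : ℕ} (μ : Measure ℝ) [SigmaFinite μ]
    [IsProbabilityMeasure μ] (f : Fin n → ℝ → ℝ≥0∞), (∀ i, Measurable (f i)) →
    ∫⁻ x : Fin n → ℝ, ∏ i, f i (x i) ∂(Measure.pi fun _ => μ) = ∏ i, ∫⁻ x, f i x ∂μ := by
  intro n
  induction n with
  | zero =>
    intro μ _ _ f hf
    simp only [Finset.univ_eq_empty, Finset.prod_empty, lintegral_one]
    simp
  | succ n ih =>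
    intro μ _ _ f hf
    rw [← ((measurePreserving_piFinSuccAbove (fun _ : Fin (n + 1) => μ)
      0).symm).lintegral_comp_emb (MeasurableEquiv.measurableEmbedding _)]
    simp_rw [MeasurableEquiv.piFinSuccAbove_symm_apply, Fin.insertNthEquiv,
      Fin.prod_univ_succ, Fin.insertNth_zero, Equiv.coe_fn_mk, Fin.cons_zero, Fin.cons_succ,
      ]
    simp only [Fin.zero_succAbove, cast_eq]
    rw [lintegral_prod_mul (μ := μ) (ν := Measure.pi fun _ : Fin n => μ)
      (f := f 0) (g := fun y : Fin n → ℝ => ∏ i : Fin n, f i.succ (y i))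
      (hf 0).aemeasurable
      (Finset.measurable_prod Finset.univ fun i _ =>
        (hf i.succ).comp (measurable_pi_apply i)).aemeasurable,
      ih μ (fun i => f i.succ) (fun i => hf i.succ), ← Fin.prod_univ_succ (fun i => ∫⁻ x, f i x ∂μ)]

lemma lintegral_exp_sq_linear {n : ℕ} (v : Fin n → ℝ) (σ2 : ℝ≥0) {a : ℝ} (ha : 0 ≤ a)
    (h : 2 * a * (σ2 * ∑ i, v i ^ 2) < 1) :
    ∫⁻ x : Fin n → ℝ, ENNReal.ofReal (rexp (a * (∑ i, v i * x i) ^ 2))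
        ∂(Measure.pi fun _ => gaussianReal 0 σ2)
      = ENNReal.ofReal ((√(1 - 2 * a * (σ2 * ∑ i, v i ^ 2)))⁻¹) := by
  have hS : Measurable fun y : Fin n → ℝ => ∑ i, v i * y i :=
    Finset.measurable_sum _ fun i _ => (measurable_pi_apply i).const_mul _
  set μW := gaussianReal 0 1 with hμW
  set Pii : Measure (Fin n → ℝ) := Measure.pi fun _ => gaussianReal 0 σ2 with hPii
  have hmeasJ : Measurable fun z : ℝ × (Fin n → ℝ) =>
      ENNReal.ofReal (rexp (√(2*a) * z.1 * ∑ i, v i * z.2 i)) :=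
    (((measurable_fst.const_mul _).mul (hS.comp measurable_snd)).exp).ennreal_ofReal
  have key1 : ∫⁻ z : ℝ × (Fin n → ℝ),
      ENNReal.ofReal (rexp (√(2*a) * z.1 * ∑ i, v i * z.2 i)) ∂(μW.prod Pii)
      = ∫⁻ x : Fin n → ℝ, ENNReal.ofReal (rexp (a * (∑ i, v i * x i) ^ 2)) ∂Pii := by
    rw [lintegral_prod_symm _ hmeasJ.aemeasurable]
    refine lintegral_congr fun y => ?_
    have h1 : ∀ w : ℝ, √(2*a) * w * ∑ i, v i * y i = (√(2*a) * ∑ i, v i * y i) * w :=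
      fun w => by ring
    simp_rw [h1]
    rw [lintegral_exp_mul_stdGaussian]
    congr 2
    rw [mul_pow, Real.sq_sqrt (by linarith : (0:ℝ) ≤ 2*a)]
    ring
  have key2 : ∫⁻ z : ℝ × (Fin n → ℝ),
      ENNReal.ofReal (rexp (√(2*a) * z.1 * ∑ i, v i * z.2 i)) ∂(μW.prod Pii)
      = ENNReal.ofReal ((√(1 - 2 * a * (σ2 * ∑ i, v i ^ 2)))⁻¹) := by
    rw [lintegral_prod _ hmeasJ.aemeasurable]
    have inner : ∀ w : ℝ, ∫⁻ y : Fin n → ℝ,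
        ENNReal.ofReal (rexp (√(2*a) * w * ∑ i, v i * y i)) ∂Pii
        = ENNReal.ofReal (rexp ((a * (σ2 * ∑ i, v i ^ 2)) * w ^ 2)) := by
      intro w
      have h2 : ∀ y : Fin n → ℝ, √(2*a) * w * ∑ i, v i * y i
          = ∑ i, (√(2*a) * w * v i) * y i := fun y => by
        rw [Finset.mul_sum]; exact Finset.sum_congr rfl fun i _ => by ring
      simp_rw [h2, Real.exp_sum,
        ENNReal.ofReal_prod_of_nonneg (fun i _ => (Real.exp_nonneg _))]
      rw [hPii, lintegral_pi_prod (gaussianReal 0 σ2)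
        (fun i y => ENNReal.ofReal (rexp (√(2*a) * w * v i * y)))
        (fun i => by fun_prop)]
      simp_rw [lintegral_exp_mul_gaussian σ2,
        ← ENNReal.ofReal_prod_of_nonneg (fun i _ => (Real.exp_nonneg _)), ← Real.exp_sum]
      congr 2
      have hpt : ∀ i, (σ2:ℝ) * (√(2*a) * w * v i) ^ 2 / 2 = (a * (σ2:ℝ) * w ^ 2) * v i ^ 2 := by
        intro i
        rw [mul_pow, mul_pow, Real.sq_sqrt (by linarith : (0:ℝ) ≤ 2*a)]
        ring
      simp_rw [hpt, ← Finset.mul_sum]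
      ring
    simp_rw [inner]
    rw [lintegral_exp_sq_stdGaussian (by linarith)]
    congr 3
    ring
  rw [← key1, key2]

lemma mgf_quadratic_le {n m : ℕ} (σ2 : ℝ≥0) (V : Fin n → Fin m → ℝ) {lam : ℝ} (hlam : 0 ≤ lam)
    (hT : lam * σ2 * (∑ j, ∑ i, V i j ^ 2) ≤ 1/4) :
    ∫⁻ x : Fin n → ℝ, ENNReal.ofReal (rexp (lam * ∑ j, (∑ i, V i j * x i) ^ 2))
        ∂(Measure.pi fun _ => gaussianReal 0 σ2) ≤ ENNReal.ofReal (√2) := by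
  classical
  set T : ℝ := ∑ j, ∑ i, V i j ^ 2 with hTdef
  have hTj_nonneg : ∀ j, (0:ℝ) ≤ ∑ i, V i j ^ 2 :=
    fun j => Finset.sum_nonneg fun i _ => sq_nonneg _
  have hT_nonneg : 0 ≤ T := Finset.sum_nonneg fun j _ => hTj_nonneg j
  have hsqrt2 : (1:ℝ) ≤ √2 := by
    rw [show (1:ℝ) = √1 by simp]
    exact Real.sqrt_le_sqrt (by norm_num)
  by_cases hT0 : T = 0
  · -- all entries vanish
    have hV : ∀ j i, V i j = 0 := by
      intro j i
      have hj : ∑ i, V i j ^ 2 = 0 :=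
        le_antisymm (hT0 ▸ Finset.single_le_sum (fun j _ => hTj_nonneg j) (Finset.mem_univ j))
          (hTj_nonneg j)
      have := (Finset.sum_eq_zero_iff_of_nonneg (fun i _ => sq_nonneg (V i j))).mp hj i
        (Finset.mem_univ i)
      exact pow_eq_zero_iff (n := 2) (by norm_num) |>.mp this
    have : ∀ x : Fin n → ℝ, (lam * ∑ j, (∑ i, V i j * x i) ^ 2) = 0 := by
      intro x
      simp [hV]
    simp_rw [this]
    simp only [Real.exp_zero, ENNReal.ofReal_one, lintegral_one]
    have : IsProbabilityMeasure (Measure.pi fun _ : Fin n => gaussianReal 0 σ2) :=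
      inferInstance
    rw [this.measure_univ]
    exact ENNReal.one_le_ofReal.mpr hsqrt2
  · have hTpos : 0 < T := lt_of_le_of_ne hT_nonneg (Ne.symm hT0)
    set p : Fin m → ℝ := fun j => (∑ i, V i j ^ 2) / T with hpdef
    have hp_nonneg : ∀ j, 0 ≤ p j := fun j => div_nonneg (hTj_nonneg j) hT_nonneg
    have hp_sum : ∑ j, p j = 1 := by
      rw [hpdef]
      simp only
      rw [← Finset.sum_div, ← hTdef, div_self hT0]
    set a : Fin m → ℝ := fun j => lam * T / (∑ i, V i j ^ 2) with hadef
    have ha_nonneg : ∀ j, 0 ≤ a j :=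
      fun j => div_nonneg (mul_nonneg hlam hT_nonneg) (hTj_nonneg j)
    set f : Fin m → (Fin n → ℝ) → ℝ≥0∞ :=
      fun j x => ENNReal.ofReal (rexp (a j * (∑ i, V i j * x i) ^ 2)) with hfdef
    have hf_meas : ∀ j, Measurable (f j) := by
      intro j
      exact ((((Finset.measurable_sum Finset.univ fun i _ =>
        (by fun_prop : Measurable fun x : Fin n → ℝ => V i j * x i)).pow_const 2).const_mul (a j)).exp).ennreal_ofReal
    -- pointwise identity
    have hpt : ∀ x : Fin n → ℝ,
        ENNReal.ofReal (rexp (lam * ∑ j, (∑ i, V i j * x i) ^ 2)) = ∏ j, f j x ^ p j := by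
      intro x
      have hfactor : ∀ j, f j x ^ p j
          = ENNReal.ofReal (rexp (lam * (∑ i, V i j * x i) ^ 2)) := by
        intro j
        by_cases hj : (∑ i, V i j ^ 2) = 0
        · have hVj : ∀ i, V i j = 0 := by
            intro i
            have := (Finset.sum_eq_zero_iff_of_nonneg (fun i _ => sq_nonneg (V i j))).mp hj i
              (Finset.mem_univ i)
            exact pow_eq_zero_iff (n := 2) (by norm_num) |>.mp this
          have hS : (∑ i, V i j * x i) = 0 := Finset.sum_eq_zero fun i _ => by simp [hVj i]
          have hp0 : p j = 0 := by rw [hpdef]; simp [hj]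
          rw [hp0, ENNReal.rpow_zero, hS]
          simp
        · rw [hfdef]
          simp only
          rw [ENNReal.ofReal_rpow_of_pos (Real.exp_pos _), ← Real.exp_mul]
          congr 2
          rw [hadef, hpdef]
          field_simp
      rw [Finset.prod_congr rfl fun j _ => hfactor j,
        ← ENNReal.ofReal_prod_of_nonneg (fun j _ => Real.exp_nonneg _), ← Real.exp_sum,
        Finset.mul_sum]
    calc ∫⁻ x : Fin n → ℝ, ENNReal.ofReal (rexp (lam * ∑ j, (∑ i, V i j * x i) ^ 2))
          ∂(Measure.pi fun _ => gaussianReal 0 σ2)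
        = ∫⁻ x, ∏ j, f j x ^ p j ∂(Measure.pi fun _ => gaussianReal 0 σ2) :=
          lintegral_congr hpt
      _ ≤ ∏ j, (∫⁻ x, f j x ∂(Measure.pi fun _ => gaussianReal 0 σ2)) ^ p j :=
          ENNReal.lintegral_prod_norm_pow_le _ (fun j _ => (hf_meas j).aemeasurable) hp_sum
            (fun j _ => hp_nonneg j)
      _ ≤ ∏ j, (ENNReal.ofReal (√2)) ^ p j := by
          refine Finset.prod_le_prod' fun j _ => ?_
          refine ENNReal.rpow_le_rpow ?_ (hp_nonneg j)
          by_cases hj : (∑ i, V i j ^ 2) = 0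
          · -- integrand constant 1
            have hVj : ∀ i, V i j = 0 := by
              intro i
              have := (Finset.sum_eq_zero_iff_of_nonneg (fun i _ => sq_nonneg (V i j))).mp hj i
                (Finset.mem_univ i)
              exact pow_eq_zero_iff (n := 2) (by norm_num) |>.mp this
            have : ∀ x : Fin n → ℝ, f j x = 1 := by
              intro x
              rw [hfdef]
              simp [hVj]
            simp_rw [this]
            rw [lintegral_one, (inferInstance :
              IsProbabilityMeasure (Measure.pi fun _ : Fin n => gaussianReal 0 σ2)).measure_univ]
            exact ENNReal.one_le_ofReal.mpr hsqrt2
          · have hkey : a j * ((σ2:ℝ) * ∑ i, V i j ^ 2) = lam * σ2 * T := by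
              rw [hadef]
              field_simp
            have hlt : 2 * a j * ((σ2:ℝ) * ∑ i, V i j ^ 2) < 1 := by
              rw [mul_assoc, hkey]
              nlinarith [hT]
            rw [hfdef]
            simp only
            rw [lintegral_exp_sq_linear _ _ (ha_nonneg j) hlt]
            apply ENNReal.ofReal_le_ofReal
            rw [mul_assoc, hkey]
            have h12 : (1:ℝ)/2 ≤ 1 - 2 * (lam * ↑σ2 * T) := by nlinarith [hT]
            calc (√(1 - 2 * (lam * ↑σ2 * T)))⁻¹ ≤ (√(1/2))⁻¹ := by
                  apply inv_anti₀ (Real.sqrt_pos.mpr (by norm_num)) (Real.sqrt_le_sqrt h12)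
              _ = √2 := by
                  rw [show (1:ℝ)/2 = 2⁻¹ by norm_num, Real.sqrt_inv, inv_inv]
      _ = ENNReal.ofReal (√2) := by
          have h2pos : (0:ℝ) < √2 := by positivity
          simp_rw [ENNReal.ofReal_rpow_of_pos h2pos]
          rw [← ENNReal.ofReal_prod_of_nonneg (fun j _ => Real.rpow_nonneg h2pos.le _)]
          rw [← Real.rpow_sum_of_pos h2pos, hp_sum, Real.rpow_one]

end AuxiliaryLemmas

/-- Union bound over groups: if `ε ∈ ℝ^n` has i.i.d. `N(0,σ²)` entries, `G` is a finite
index set with `|G| ≤ p` (`p ≥ 2`), and for each `g ∈ G` the matrix `X_g` has `{0,1}`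
entries with at most `p_g` nonzero columns, `1 ≤ p_g ≤ 2^k − 1`, then
`P(max_{g∈G} (1/n)√((2^k−1)/p_g)‖X_gᵀε‖ > 2√(2(2^k−1)) σ √(2 log p / n)) < 1/p`. -/
theorem grouped_binary_matrix_gaussian_union_bound
    (n p k : ℕ) (hn : 1 ≤ n) (hp : 2 ≤ p) (hk : 1 ≤ k) (σ : ℝ) (hσ : 0 < σ)
    {Ωs : Type*} [MeasurableSpace Ωs] (P : Measure Ωs) [IsProbabilityMeasure P]
    (ε : Ωs → Fin n → ℝ) (hmeas : Measurable ε)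
    (hlaw : Measure.map ε P
      = Measure.pi fun _ : Fin n => gaussianReal 0 ⟨σ ^ 2, sq_nonneg σ⟩)
    (G : Type*) [Fintype G] (hG : Fintype.card G ≤ p)
    (mg : G → ℕ) (pg : G → ℕ) (hpg1 : ∀ g, 1 ≤ pg g) (hpg2 : ∀ g, pg g ≤ 2 ^ k - 1)
    (X : (g : G) → Matrix (Fin n) (Fin (mg g)) ℝ)
    (hX01 : ∀ g, ∀ i j, X g i j = 0 ∨ X g i j = 1)
    (hcols : ∀ g,
      (Finset.univ.filter fun j : Fin (mg g) => (fun i => X g i j) ≠ 0).card ≤ pg g) :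
    P {ω | ∃ g : G,
          (1 / (n : ℝ)) * Real.sqrt (((2 ^ k - 1 : ℝ)) / pg g)
              * Real.sqrt (∑ j, (∑ i, X g i j * ε ω i) ^ 2)
            > 2 * Real.sqrt (2 * (2 ^ k - 1 : ℝ)) * σ * Real.sqrt (2 * Real.log p / n)}
      < 1 / (p : ℝ≥0∞) := by
  classical
  -- basic positivity facts
  have hn' : (0:ℝ) < n := by exact_mod_cast hn
  have hp' : (1:ℝ) < p := by exact_mod_cast lt_of_lt_of_le one_lt_two (by exact_mod_cast hp)
  have hlogp : 0 < Real.log p := Real.log_pos hp'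
  have hr : (1:ℝ) ≤ 2 ^ k - 1 := by
    have : (2:ℝ) ^ 1 ≤ 2 ^ k := pow_le_pow_right₀ one_le_two hk
    simpa using by linarith [this]
  have hr0 : (0:ℝ) < 2 ^ k - 1 := by linarith
  set σ2 : ℝ≥0 := ⟨σ ^ 2, sq_nonneg σ⟩ with hσ2
  set Pii : Measure (Fin n → ℝ) := Measure.pi fun _ : Fin n => gaussianReal 0 σ2 with hPii
  -- per-group quantities
  set Q : (g : G) → (Fin n → ℝ) → ℝ := fun g x => ∑ j, (∑ i, X g i j * x i) ^ 2 with hQ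
  set C : G → ℝ := fun g => 16 * σ ^ 2 * n * (pg g) * Real.log p with hC
  have hq : ∀ g, (1:ℝ) ≤ pg g := fun g => by exact_mod_cast hpg1 g
  have hQmeas : ∀ g, Measurable (Q g) := by
    intro g
    exact Finset.measurable_sum _ fun j _ =>
      (Finset.measurable_sum _ fun i _ => (by fun_prop : Measurable fun x : Fin n → ℝ => X g i j * x i)).pow_const 2
  -- pointwise equivalence between the original event and the quadratic event
  have hiff : ∀ (g : G) (x : Fin n → ℝ),
      ((1 / (n : ℝ)) * Real.sqrt (((2 ^ k - 1 : ℝ)) / pg g) * Real.sqrt (Q g x)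
        > 2 * Real.sqrt (2 * (2 ^ k - 1 : ℝ)) * σ * Real.sqrt (2 * Real.log p / n))
      ↔ C g < Q g x := by
    intro g x
    set r : ℝ := 2 ^ k - 1
    set q : ℝ := (pg g : ℝ)
    have hq1 : (1:ℝ) ≤ q := hq g
    have hq0 : (0:ℝ) < q := by linarith
    have hc1 : (0:ℝ) < (1 / (n:ℝ)) * Real.sqrt (r / q) := by positivity
    have hR : (0:ℝ) < 2 * Real.sqrt (2 * r) * σ * Real.sqrt (2 * Real.log p / n) := by
      positivity
    rw [gt_iff_lt, mul_comm ((1 / (n:ℝ)) * Real.sqrt (r / q)) (Real.sqrt (Q g x)),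
      ← div_lt_iff₀ hc1, Real.lt_sqrt (by positivity)]
    constructor
    · intro h
      refine lt_of_le_of_lt (le_of_eq ?_) h
      rw [div_pow, mul_pow, mul_pow, mul_pow, Real.sq_sqrt (by positivity : (0:ℝ) ≤ 2 * r),
        Real.sq_sqrt (by positivity : (0:ℝ) ≤ 2 * Real.log p / n), mul_pow,
        Real.sq_sqrt (by positivity : (0:ℝ) ≤ r / q), hC]
      simp only
      field_simp
      ring
    · intro h
      refine lt_of_le_of_lt (le_of_eq ?_) h
      rw [div_pow, mul_pow, mul_pow, mul_pow, Real.sq_sqrt (by positivity : (0:ℝ) ≤ 2 * r),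
        Real.sq_sqrt (by positivity : (0:ℝ) ≤ 2 * Real.log p / n), mul_pow,
        Real.sq_sqrt (by positivity : (0:ℝ) ≤ r / q), hC]
      simp only
      field_simp
      ring
  -- rewrite the event as a preimage
  have hsetmeas : ∀ g : G, MeasurableSet {x : Fin n → ℝ | C g < Q g x} :=
    fun g => measurableSet_lt measurable_const (hQmeas g)
  have hset : {ω | ∃ g : G,
          (1 / (n : ℝ)) * Real.sqrt (((2 ^ k - 1 : ℝ)) / pg g)
              * Real.sqrt (∑ j, (∑ i, X g i j * ε ω i) ^ 2)
            > 2 * Real.sqrt (2 * (2 ^ k - 1 : ℝ)) * σ * Real.sqrt (2 * Real.log p / n)}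
      = ε ⁻¹' (⋃ g : G, {x : Fin n → ℝ | C g < Q g x}) := by
    ext ω
    simp only [Set.mem_setOf_eq, Set.mem_preimage, Set.mem_iUnion]
    exact exists_congr fun g => hiff g (ε ω)
  rw [hset, ← Measure.map_apply hmeas (MeasurableSet.iUnion fun g => hsetmeas g), hlaw]
  -- union bound
  have hunion : Pii (⋃ g : G, {x : Fin n → ℝ | C g < Q g x})
      ≤ ∑ g : G, Pii {x : Fin n → ℝ | C g < Q g x} := measure_iUnion_fintype_le _ _
  -- per-group bound
  have hgroup : ∀ g : G, Pii {x : Fin n → ℝ | C g < Q g x}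
      ≤ ENNReal.ofReal (Real.sqrt 2 / (p:ℝ) ^ 4) := by
    intro g
    set q : ℝ := (pg g : ℝ) with hqdef
    have hq1 : (1:ℝ) ≤ q := hq g
    have hq0 : (0:ℝ) < q := by linarith
    set lam : ℝ := 1 / (4 * σ ^ 2 * n * q) with hlam
    have hlam0 : 0 < lam := by positivity
    -- T bound
    have hTb : (∑ j, ∑ i, X g i j ^ 2) ≤ q * n := by
      have hcol : ∀ j : Fin (mg g), (∑ i, X g i j ^ 2) ≤ (n:ℝ) := by
        intro j
        calc (∑ i, X g i j ^ 2) ≤ ∑ _i : Fin n, (1:ℝ) := by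
              refine Finset.sum_le_sum fun i _ => ?_
              rcases hX01 g i j with h | h <;> rw [h] <;> norm_num
          _ = n := by simp
      have hz : ∀ j ∈ Finset.univ, (∑ i, X g i j ^ 2) ≠ 0 →
          ((fun i => X g i j) ≠ 0) := by
        intro j _ hne
        intro hcontra
        apply hne
        refine Finset.sum_eq_zero fun i _ => ?_
        have : X g i j = 0 := congrFun hcontra i
        simp [this]
      calc (∑ j, ∑ i, X g i j ^ 2)
          = ∑ j ∈ Finset.univ.filter fun j : Fin (mg g) => (fun i => X g i j) ≠ 0,
              ∑ i, X g i j ^ 2 := (Finset.sum_filter_of_ne hz).symm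
        _ ≤ ∑ j ∈ Finset.univ.filter fun j : Fin (mg g) => (fun i => X g i j) ≠ 0, (n:ℝ) :=
            Finset.sum_le_sum fun j _ => hcol j
        _ = ((Finset.univ.filter fun j : Fin (mg g) => (fun i => X g i j) ≠ 0).card : ℝ) * n := by
            rw [Finset.sum_const, nsmul_eq_mul]
        _ ≤ q * n := by
            have hcard : ((Finset.univ.filter fun j : Fin (mg g) =>
                (fun i => X g i j) ≠ 0).card : ℝ) ≤ (pg g : ℝ) := by
              exact_mod_cast hcols g
            rw [hqdef]
            nlinarith [hn', hcard]
    have hmgf : ∫⁻ x : Fin n → ℝ, ENNReal.ofReal (Real.exp (lam * Q g x)) ∂Pii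
        ≤ ENNReal.ofReal (Real.sqrt 2) := by
      rw [hPii]
      refine mgf_quadratic_le σ2 (fun i j => X g i j) hlam0.le ?_
      have hσ2c : (σ2 : ℝ) = σ ^ 2 := rfl
      rw [hσ2c, hlam]
      have hT0 : (0:ℝ) ≤ ∑ j, ∑ i, X g i j ^ 2 :=
        Finset.sum_nonneg fun j _ => Finset.sum_nonneg fun i _ => sq_nonneg _
      rw [div_mul_eq_mul_div, div_mul_eq_mul_div, one_mul, div_le_iff₀ (by positivity)]
      nlinarith [hTb]
    -- Markov
    have hsub : {x : Fin n → ℝ | C g < Q g x}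
        ⊆ {x : Fin n → ℝ | ENNReal.ofReal (Real.exp (lam * C g))
            ≤ ENNReal.ofReal (Real.exp (lam * Q g x))} := by
      intro x hx
      exact ENNReal.ofReal_le_ofReal (Real.exp_le_exp.mpr
        (mul_le_mul_of_nonneg_left (le_of_lt hx) hlam0.le))
    have hmarkov := mul_meas_ge_le_lintegral₀ (μ := Pii)
      (f := fun x => ENNReal.ofReal (Real.exp (lam * Q g x)))
      (((hQmeas g).const_mul lam).exp.ennreal_ofReal.aemeasurable)
      (ENNReal.ofReal (Real.exp (lam * C g)))
    have hε0 : ENNReal.ofReal (Real.exp (lam * C g)) ≠ 0 := by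
      simp [Real.exp_pos]
    have hεtop : ENNReal.ofReal (Real.exp (lam * C g)) ≠ ⊤ := ENNReal.ofReal_ne_top
    have hle : Pii {x : Fin n → ℝ | C g < Q g x}
        ≤ ENNReal.ofReal (Real.sqrt 2) / ENNReal.ofReal (Real.exp (lam * C g)) := by
      rw [ENNReal.le_div_iff_mul_le (Or.inl hε0) (Or.inl hεtop)]
      calc Pii {x : Fin n → ℝ | C g < Q g x} * ENNReal.ofReal (Real.exp (lam * C g))
          ≤ Pii {x : Fin n → ℝ | ENNReal.ofReal (Real.exp (lam * C g))
              ≤ ENNReal.ofReal (Real.exp (lam * Q g x))}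
            * ENNReal.ofReal (Real.exp (lam * C g)) :=
            mul_le_mul_left (measure_mono hsub) _
        _ ≤ ENNReal.ofReal (Real.sqrt 2) := by
            rw [mul_comm]
            exact hmarkov.trans hmgf
    refine hle.trans (le_of_eq ?_)
    have hlamC : lam * C g = 4 * Real.log p := by
      rw [hlam, hC]
      simp only
      rw [hqdef]
      field_simp
      ring_nf
      rw [mul_inv_cancel₀ (ne_of_gt (lt_of_lt_of_le one_pos (hq g))), one_mul]
    rw [hlamC, show (4:ℝ) * Real.log p = ((4:ℕ):ℝ) * Real.log p by norm_num,
      Real.exp_nat_mul, Real.exp_log (by positivity : (0:ℝ) < p)]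
    rw [ENNReal.ofReal_div_of_pos (by positivity)]
  -- combine
  have hsum : ∑ g : G, Pii {x : Fin n → ℝ | C g < Q g x}
      ≤ (p : ℝ≥0∞) * ENNReal.ofReal (Real.sqrt 2 / (p:ℝ) ^ 4) := by
    calc ∑ g : G, Pii {x : Fin n → ℝ | C g < Q g x}
        ≤ ∑ _g : G, ENNReal.ofReal (Real.sqrt 2 / (p:ℝ) ^ 4) :=
          Finset.sum_le_sum fun g _ => hgroup g
      _ = (Fintype.card G : ℝ≥0∞) * ENNReal.ofReal (Real.sqrt 2 / (p:ℝ) ^ 4) := by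
          rw [Finset.sum_const, nsmul_eq_mul]; rfl
      _ ≤ (p : ℝ≥0∞) * ENNReal.ofReal (Real.sqrt 2 / (p:ℝ) ^ 4) :=
          mul_le_mul_left (by exact_mod_cast hG) _
  have hp0 : (0:ℝ) < p := by linarith
  have hp2 : (2:ℝ) ≤ p := by exact_mod_cast hp
  calc Pii (⋃ g : G, {x : Fin n → ℝ | C g < Q g x})
      ≤ ∑ g : G, Pii {x : Fin n → ℝ | C g < Q g x} := hunion
    _ ≤ (p : ℝ≥0∞) * ENNReal.ofReal (Real.sqrt 2 / (p:ℝ) ^ 4) := hsum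
    _ = ENNReal.ofReal ((p:ℝ) * (Real.sqrt 2 / (p:ℝ) ^ 4)) := by
        rw [← ENNReal.ofReal_natCast p, ← ENNReal.ofReal_mul (by positivity)]
    _ < 1 / (p : ℝ≥0∞) := by
        have hfinal : (p:ℝ) * (Real.sqrt 2 / (p:ℝ) ^ 4) < 1 / (p:ℝ) := by
          have hsqrt2lt : Real.sqrt 2 < 2 := by
            nlinarith [Real.sq_sqrt (by norm_num : (0:ℝ) ≤ 2), Real.sqrt_nonneg 2]
          have heq : (p:ℝ) * (Real.sqrt 2 / (p:ℝ) ^ 4) = Real.sqrt 2 / (p:ℝ) ^ 3 := by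
            field_simp
          rw [heq, div_lt_div_iff₀ (by positivity) hp0]
          nlinarith [mul_lt_mul_of_pos_right hsqrt2lt hp0, hp2, hp0, sq_nonneg ((p:ℝ) - 2)]
        have h1p : 1 / (p:ℝ≥0∞) = ENNReal.ofReal (1 / (p:ℝ)) := by
          rw [one_div, one_div, ← ENNReal.ofReal_natCast p, ← ENNReal.ofReal_inv_of_pos hp0]
        rw [h1p]
        exact (ENNReal.ofReal_lt_ofReal_iff (by positivity)).mpr hfinal
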